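/- Let F : ℕ → ℕ be the Fibonacci sequence with F(0) = F(1) = 1 and F(k+2) = F(k+1) + F(k), let φ = (1 + √5)/2 be the golden ratio, let m ≥ 1 and J ≥ 2 be natural numbers, let r = −2^{−m}, and let z be a real number with |z| ≤ 2. Then |z·∑_{k=0}^{F(J)−1} r^k − z·∑_{k=0}^{F(J+1)−1} r^k| ≤ 2^{−φ^{J−1}·m + 2}. -/

import Mathlib

theorem div_aux_error_bound (F : ℕ → ℕ)
    (hF0 : F 0 = 1) (hF1 : F 1 = 1)
    (hF : ∀ k, F (k + 2) = F (k + 1) + F k)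
    (φ : ℝ) (hφ : φ = (1 + Real.sqrt 5) / 2)
    (m J : ℕ) (hm : 1 ≤ m) (hJ : 2 ≤ J)
    (r : ℝ) (hr : r = -(2 : ℝ) ^ (-(m : ℤ)))
    (z : ℝ) (hz : |z| ≤ 2) :
    |z * ∑ k ∈ Finset.range (F J), r ^ k - z * ∑ k ∈ Finset.range (F (J + 1)), r ^ k| ≤
      (2 : ℝ) ^ (-(φ ^ (J - 1)) * (m : ℝ) + 2) := by
  have hφeq : φ = Real.goldenRatio := by rw [hφ, Real.goldenRatio]
  -- φ^n ≤ F (n+1)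
  have key : ∀ n, φ ^ n ≤ (F (n + 1) : ℝ) := by
    intro n
    induction n using Nat.twoStepInduction with
    | zero => simp [hF 0, hF0, hF1]
    | one =>
      have := Real.goldenRatio_lt_two
      rw [hφeq]
      have : F 2 = 2 := by rw [hF 0, hF0, hF1]
      rw [this]; push_cast; linarith
    | more n ih1 ih2 =>
      have h1 : φ ^ (n + 2) = φ ^ (n + 1) + φ ^ n := by
        rw [hφeq]
        have := Real.goldenRatio_pow_sub_goldenRatio_pow n
        linarith
      rw [h1, hF (n + 1)]
      push_cast
      linarith
  set a : ℝ := (2 : ℝ) ^ (-(m : ℤ)) with ha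
  have ha0 : 0 < a := by positivity
  have ha1 : a ≤ 1 / 2 := by
    rw [ha]
    calc (2 : ℝ) ^ (-(m : ℤ)) ≤ (2 : ℝ) ^ (-1 : ℤ) := by
          apply zpow_le_zpow_right₀ (by norm_num)
          omega
      _ = 1 / 2 := by norm_num
  have hrne : r ≠ 1 := by rw [hr]; nlinarith
  set N := F J with hN
  set M := F (J + 1) with hM
  have hNM : N ≤ M := by
    have h := hF (J - 1)
    rw [show J - 1 + 2 = J + 1 by omega, show J - 1 + 1 = J by omega] at h
    rw [hN, hM]
    omega
  have hgs : ∀ n : ℕ, ∑ k ∈ Finset.range n, r ^ k = (r ^ n - 1) / (r - 1) :=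
    fun n => geom_sum_eq hrne n
  have habs : |r| = a := by rw [hr, abs_neg, abs_of_pos ha0]
  have hdiff : z * ∑ k ∈ Finset.range N, r ^ k - z * ∑ k ∈ Finset.range M, r ^ k
      = z * ((r ^ N - r ^ M) / (r - 1)) := by
    rw [hgs, hgs]; ring
  have hr1 : 1 ≤ |r - 1| := by
    rw [hr]
    rw [abs_of_nonpos (by nlinarith)]
    nlinarith
  have hbound : |z * ∑ k ∈ Finset.range N, r ^ k - z * ∑ k ∈ Finset.range M, r ^ k|
      ≤ 4 * a ^ N := by
    rw [hdiff, abs_mul, abs_div]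
    have h1 : |r ^ N - r ^ M| ≤ 2 * a ^ N := by
      calc |r ^ N - r ^ M| ≤ |r ^ N| + |r ^ M| := abs_sub _ _
        _ = a ^ N + a ^ M := by rw [abs_pow, abs_pow, habs]
        _ ≤ a ^ N + a ^ N := by
            have := pow_le_pow_of_le_one ha0.le (by linarith) hNM
            linarith
        _ = 2 * a ^ N := by ring
    have h2 : |r ^ N - r ^ M| / |r - 1| ≤ 2 * a ^ N := by
      rw [div_le_iff₀ (by linarith)]
      calc |r ^ N - r ^ M| ≤ 2 * a ^ N := h1
        _ = 2 * a ^ N * 1 := by ring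
        _ ≤ 2 * a ^ N * |r - 1| := by
            apply mul_le_mul_of_nonneg_left hr1; positivity
    calc |z| * (|r ^ N - r ^ M| / |r - 1|) ≤ 2 * (2 * a ^ N) := by
          apply mul_le_mul hz h2 (by positivity) (by norm_num)
      _ = 4 * a ^ N := by ring
  refine hbound.trans ?_
  have e1 : a ^ N = (2 : ℝ) ^ (((-(m : ℤ) * N : ℤ)) : ℝ) := by
    rw [ha, ← zpow_natCast ((2:ℝ) ^ (-(m:ℤ))) N, ← zpow_mul, Real.rpow_intCast]
  have e2 : (2 : ℝ) ^ (((2:ℕ)):ℝ) = 4 := by rw [Real.rpow_natCast]; norm_num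
  have h4 : (4 : ℝ) * a ^ N = (2 : ℝ) ^ (-((N : ℝ) * m) + 2) := by
    rw [show -((N : ℝ) * m) + 2 = ((-(m : ℤ) * N : ℤ) : ℝ) + ((2:ℕ):ℝ) by push_cast; ring,
      Real.rpow_add (by norm_num), e2, e1]
    ring
  rw [h4]
  apply Real.rpow_le_rpow_of_exponent_le (by norm_num)
  have hkey : φ ^ (J - 1) ≤ (N : ℝ) := by
    have := key (J - 1)
    have hJ1 : J - 1 + 1 = J := by omega
    rwa [hJ1] at this
  have hm1 : (1 : ℝ) ≤ (m : ℝ) := by exact_mod_cast hm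
  nlinarith [pow_pos (show (0:ℝ) < φ by rw [hφ]; positivity) (J - 1)]
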